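/- Define D̂ = λ(Σ12² + Σ13²) + 2Σ12Σ13 and Z2 = A⁴N²G+⁵D̂² / ((1−V²)^{5(2−γ)/2}·Ω⁵). At any point of a solution of the tilted Bianchi type VI_{-1/9} system satisfying the constraints with Ω > 0, V < 1, A ≠ 0, N ≠ 0 and D̂ ≠ 0, one has Z2 > 0 and 3 − 2A v1 > 0 (using A² ≤ 1 from constraint (C1) and |v1| ≤ V < 1); consequently Z2 is strictly monotonically decreasing along the solution if 0 < γ < 6/5 and strictly monotonically increasing if 6/5 < γ < 2. -/

import Mathlib

noncomputable section

namespace BianchiVI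

/-- squared tilt speed `V² = v1² + v2² + v3²`. -/
def Vsq (v1 v2 v3 : ℝ) : ℝ := v1^2 + v2^2 + v3^2

/-- `G₊ = 1 + (γ-1) V²`. -/
def Gp (γ v1 v2 v3 : ℝ) : ℝ := 1 + (γ - 1) * Vsq v1 v2 v3

/-- total shear `Σ²`. -/
def Sig2 (sp sm s12 s13 s23 : ℝ) : ℝ := sp^2 + sm^2 + s12^2 + s13^2 + s23^2

/-- deceleration parameter `q`. -/
def qdef (γ sp sm s12 s13 s23 Om v1 v2 v3 : ℝ) : ℝ :=
  2 * Sig2 sp sm s12 s13 s23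
    + (1/2) * ((3*γ - 2) + (2 - γ) * Vsq v1 v2 v3) * Om / Gp γ v1 v2 v3

/-- `P = Σ_{ab} v^a v^b · V²`, so that `S = P/V²`. -/
def Pdef (sp sm s12 s13 s23 v1 v2 v3 : ℝ) : ℝ :=
  -2*sp*v1^2 + (sp + Real.sqrt 3 * sm) * v2^2 + (sp - Real.sqrt 3 * sm) * v3^2
    + 2*Real.sqrt 3*(s12*v1*v2 + s13*v1*v3 + s23*v2*v3)

/-- `S = Σ_{ab} c^a c^b`. -/
def Sdef (sp sm s12 s13 s23 v1 v2 v3 : ℝ) : ℝ :=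
  if 0 < Vsq v1 v2 v3 then Pdef sp sm s12 s13 s23 v1 v2 v3 / Vsq v1 v2 v3 else 0

/-- the quantity `T`. -/
def Tdef (γ sp sm s12 s13 s23 A v1 v2 v3 : ℝ) : ℝ :=
  (((3*γ - 4) - 2*(γ-1)*A*v1) * (1 - Vsq v1 v2 v3)
      + (2 - γ) * Pdef sp sm s12 s13 s23 v1 v2 v3)
    / (1 - (γ - 1) * Vsq v1 v2 v3)

/-- right-hand side of the evolution equation. -/
def rhsSp (γ sp sm s12 s13 s23 N lam A Om v1 v2 v3 : ℝ) : ℝ :=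
  (qdef γ sp sm s12 s13 s23 Om v1 v2 v3 - 2) * sp + 3*(s12^2 + s13^2) - 2*N^2 + (γ*Om/(2*(Gp γ v1 v2 v3))) * (-2*v1^2 + v2^2 + v3^2)

/-- right-hand side of the evolution equation. -/
def rhsSm (γ sp sm s12 s13 s23 N lam A Om v1 v2 v3 : ℝ) : ℝ :=
  (qdef γ sp sm s12 s13 s23 Om v1 v2 v3 - 2 - 2*Real.sqrt 3*s23*lam) * sm + Real.sqrt 3*(s12^2 - s13^2) + 2*A*N + (Real.sqrt 3*γ*Om/(2*(Gp γ v1 v2 v3))) * (v2^2 - v3^2)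

/-- right-hand side of the evolution equation. -/
def rhsS12 (γ sp sm s12 s13 s23 N lam A Om v1 v2 v3 : ℝ) : ℝ :=
  (qdef γ sp sm s12 s13 s23 Om v1 v2 v3 - 2 - 3*sp - Real.sqrt 3*sm) * s12 - Real.sqrt 3*(s23 + sm*lam)*s13 + (Real.sqrt 3*γ*Om/(Gp γ v1 v2 v3))*v1*v2

/-- right-hand side of the evolution equation. -/
def rhsS13 (γ sp sm s12 s13 s23 N lam A Om v1 v2 v3 : ℝ) : ℝ :=
  (qdef γ sp sm s12 s13 s23 Om v1 v2 v3 - 2 - 3*sp + Real.sqrt 3*sm) * s13 - Real.sqrt 3*(s23 - sm*lam)*s12 + (Real.sqrt 3*γ*Om/(Gp γ v1 v2 v3))*v1*v3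

/-- right-hand side of the evolution equation. -/
def rhsS23 (γ sp sm s12 s13 s23 N lam A Om v1 v2 v3 : ℝ) : ℝ :=
  (qdef γ sp sm s12 s13 s23 Om v1 v2 v3 - 2) * s23 - 2*Real.sqrt 3*N^2*lam + 2*Real.sqrt 3*lam*sm^2 + 2*Real.sqrt 3*s12*s13 + (Real.sqrt 3*γ*Om/(Gp γ v1 v2 v3))*v2*v3

/-- right-hand side of the evolution equation. -/
def rhsN (γ sp sm s12 s13 s23 N lam A Om v1 v2 v3 : ℝ) : ℝ :=
  (qdef γ sp sm s12 s13 s23 Om v1 v2 v3 + 2*sp + 2*Real.sqrt 3*s23*lam) * N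

/-- right-hand side of the evolution equation. -/
def rhsLam (γ sp sm s12 s13 s23 N lam A Om v1 v2 v3 : ℝ) : ℝ :=
  2*Real.sqrt 3*s23*(1 - lam^2)

/-- right-hand side of the evolution equation. -/
def rhsA (γ sp sm s12 s13 s23 N lam A Om v1 v2 v3 : ℝ) : ℝ :=
  (qdef γ sp sm s12 s13 s23 Om v1 v2 v3 + 2*sp) * A

/-- right-hand side of the evolution equation. -/
def rhsOm (γ sp sm s12 s13 s23 N lam A Om v1 v2 v3 : ℝ) : ℝ :=
  (Om/(Gp γ v1 v2 v3)) * (2*(qdef γ sp sm s12 s13 s23 Om v1 v2 v3) - (3*γ-2) + 2*γ*A*v1 + (2*(qdef γ sp sm s12 s13 s23 Om v1 v2 v3)*(γ-1) - (2-γ)) * Vsq v1 v2 v3 - γ*(Pdef sp sm s12 s13 s23 v1 v2 v3))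

/-- right-hand side of the evolution equation. -/
def rhsV1 (γ sp sm s12 s13 s23 N lam A Om v1 v2 v3 : ℝ) : ℝ :=
  ((Tdef γ sp sm s12 s13 s23 A v1 v2 v3) + 2*sp)*v1 - 2*Real.sqrt 3*s13*v3 - 2*Real.sqrt 3*s12*v2 - A*(v2^2 + v3^2) - Real.sqrt 3*N*(v2^2 - v3^2)

/-- right-hand side of the evolution equation. -/
def rhsV2 (γ sp sm s12 s13 s23 N lam A Om v1 v2 v3 : ℝ) : ℝ :=
  ((Tdef γ sp sm s12 s13 s23 A v1 v2 v3) - sp - Real.sqrt 3*sm)*v2 - Real.sqrt 3*(s23 + sm*lam)*v3 + Real.sqrt 3*lam*N*v1*v3 + (A + Real.sqrt 3*N)*v1*v2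

/-- right-hand side of the evolution equation. -/
def rhsV3 (γ sp sm s12 s13 s23 N lam A Om v1 v2 v3 : ℝ) : ℝ :=
  ((Tdef γ sp sm s12 s13 s23 A v1 v2 v3) - sp + Real.sqrt 3*sm)*v3 - Real.sqrt 3*(s23 - sm*lam)*v2 - Real.sqrt 3*lam*N*v1*v2 + (A - Real.sqrt 3*N)*v1*v3

/-- the five constraint equations (C1)-(C5). -/
def SatisfiesConstraints (γ sp sm s12 s13 s23 N lam A Om v1 v2 v3 : ℝ) : Prop :=
  Sig2 sp sm s12 s13 s23 + A^2 + N^2 + Om = 1 ∧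
  2*sp*A + 2*sm*N + γ*Om*v1/(Gp γ v1 v2 v3) = 0 ∧
  -(s12*(N + Real.sqrt 3*A) + s13*lam*N) + γ*Om*v2/(Gp γ v1 v2 v3) = 0 ∧
  s13*(N - Real.sqrt 3*A) + s12*lam*N + γ*Om*v3/(Gp γ v1 v2 v3) = 0 ∧
  3*A^2 = (1 - lam^2)*N^2

/-- equilibrium point: all twelve right-hand sides vanish. -/
def IsEquilibrium (γ sp sm s12 s13 s23 N lam A Om v1 v2 v3 : ℝ) : Prop :=
  rhsSp γ sp sm s12 s13 s23 N lam A Om v1 v2 v3 = 0 ∧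
  rhsSm γ sp sm s12 s13 s23 N lam A Om v1 v2 v3 = 0 ∧
  rhsS12 γ sp sm s12 s13 s23 N lam A Om v1 v2 v3 = 0 ∧
  rhsS13 γ sp sm s12 s13 s23 N lam A Om v1 v2 v3 = 0 ∧
  rhsS23 γ sp sm s12 s13 s23 N lam A Om v1 v2 v3 = 0 ∧
  rhsN γ sp sm s12 s13 s23 N lam A Om v1 v2 v3 = 0 ∧
  rhsLam γ sp sm s12 s13 s23 N lam A Om v1 v2 v3 = 0 ∧
  rhsA γ sp sm s12 s13 s23 N lam A Om v1 v2 v3 = 0 ∧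
  rhsOm γ sp sm s12 s13 s23 N lam A Om v1 v2 v3 = 0 ∧
  rhsV1 γ sp sm s12 s13 s23 N lam A Om v1 v2 v3 = 0 ∧
  rhsV2 γ sp sm s12 s13 s23 N lam A Om v1 v2 v3 = 0 ∧
  rhsV3 γ sp sm s12 s13 s23 N lam A Om v1 v2 v3 = 0

/-- a solution of the tilted Bianchi type VI_(-1/9) system on the set `dom`:
the twelve evolution equations and the five constraints hold at every `τ ∈ dom`. -/
def IsSolutionOn (γ : ℝ) (dom : Set ℝ) (sp sm s12 s13 s23 N lam A Om v1 v2 v3 : ℝ → ℝ) : Prop :=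
  ∀ τ ∈ dom,
    (HasDerivAt sp (rhsSp γ (sp τ) (sm τ) (s12 τ) (s13 τ) (s23 τ) (N τ) (lam τ) (A τ) (Om τ) (v1 τ) (v2 τ) (v3 τ)) τ ∧
    HasDerivAt sm (rhsSm γ (sp τ) (sm τ) (s12 τ) (s13 τ) (s23 τ) (N τ) (lam τ) (A τ) (Om τ) (v1 τ) (v2 τ) (v3 τ)) τ ∧
    HasDerivAt s12 (rhsS12 γ (sp τ) (sm τ) (s12 τ) (s13 τ) (s23 τ) (N τ) (lam τ) (A τ) (Om τ) (v1 τ) (v2 τ) (v3 τ)) τ ∧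
    HasDerivAt s13 (rhsS13 γ (sp τ) (sm τ) (s12 τ) (s13 τ) (s23 τ) (N τ) (lam τ) (A τ) (Om τ) (v1 τ) (v2 τ) (v3 τ)) τ ∧
    HasDerivAt s23 (rhsS23 γ (sp τ) (sm τ) (s12 τ) (s13 τ) (s23 τ) (N τ) (lam τ) (A τ) (Om τ) (v1 τ) (v2 τ) (v3 τ)) τ ∧
    HasDerivAt N (rhsN γ (sp τ) (sm τ) (s12 τ) (s13 τ) (s23 τ) (N τ) (lam τ) (A τ) (Om τ) (v1 τ) (v2 τ) (v3 τ)) τ ∧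
    HasDerivAt lam (rhsLam γ (sp τ) (sm τ) (s12 τ) (s13 τ) (s23 τ) (N τ) (lam τ) (A τ) (Om τ) (v1 τ) (v2 τ) (v3 τ)) τ ∧
    HasDerivAt A (rhsA γ (sp τ) (sm τ) (s12 τ) (s13 τ) (s23 τ) (N τ) (lam τ) (A τ) (Om τ) (v1 τ) (v2 τ) (v3 τ)) τ ∧
    HasDerivAt Om (rhsOm γ (sp τ) (sm τ) (s12 τ) (s13 τ) (s23 τ) (N τ) (lam τ) (A τ) (Om τ) (v1 τ) (v2 τ) (v3 τ)) τ ∧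
    HasDerivAt v1 (rhsV1 γ (sp τ) (sm τ) (s12 τ) (s13 τ) (s23 τ) (N τ) (lam τ) (A τ) (Om τ) (v1 τ) (v2 τ) (v3 τ)) τ ∧
    HasDerivAt v2 (rhsV2 γ (sp τ) (sm τ) (s12 τ) (s13 τ) (s23 τ) (N τ) (lam τ) (A τ) (Om τ) (v1 τ) (v2 τ) (v3 τ)) τ ∧
    HasDerivAt v3 (rhsV3 γ (sp τ) (sm τ) (s12 τ) (s13 τ) (s23 τ) (N τ) (lam τ) (A τ) (Om τ) (v1 τ) (v2 τ) (v3 τ)) τ) ∧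
    SatisfiesConstraints γ (sp τ) (sm τ) (s12 τ) (s13 τ) (s23 τ) (N τ) (lam τ) (A τ) (Om τ) (v1 τ) (v2 τ) (v3 τ)

/-- `D̂ = λ(Σ12² + Σ13²) + 2 Σ12 Σ13`. -/
def Dhat (lam s12 s13 : ℝ) : ℝ := lam*(s12^2 + s13^2) + 2*s12*s13

/-- the monotone function `Z2`. -/
def Z2fun (γ : ℝ) (s12 s13 N lam A Om v1 v2 v3 : ℝ → ℝ) : ℝ → ℝ := fun τ =>
  (A τ)^4 * (N τ)^2 * (Gp γ (v1 τ) (v2 τ) (v3 τ))^5 * (Dhat (lam τ) (s12 τ) (s13 τ))^2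
    / ((1 - Vsq (v1 τ) (v2 τ) (v3 τ)) ^ ((5*(2-γ)/2 : ℝ)) * (Om τ)^5)


set_option maxHeartbeats 2000000 in
private lemma step1 {g w GP Q r sp sm c d e n l a u v x rc rd rl : ℝ}
    (h3 : r^2 = 3)
    (he3 : g*w*v/GP = c*(n + r*a) + d*l*n)
    (he4 : g*w*x/GP = -(d*(n - r*a) + c*l*n))
    (hrc : rc = (Q - 2 - 3*sp - r*sm) * c - r*(e + sm*l)*d + (r*g*w/GP)*u*v)
    (hrd : rd = (Q - 2 - 3*sp + r*sm) * d - r*(e - sm*l)*c + (r*g*w/GP)*u*x)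
    (hrl : rl = 2*r*e*(1 - l^2)) :
    rl*(c^2+d^2) + l*(2*c*rc + 2*d*rd) + 2*(rc*d + c*rd)
      = (2*(Q - 2 - 3*sp + 3*(a*u)) - 2*r*e*l)*(l*(c^2+d^2) + 2*c*d) := by
  subst hrc hrd hrl
  linear_combination (2*r*u*(l*c + d))*he3 + (2*r*u*(l*d + c))*he4
    + (2*a*u*(l*(c^2+d^2) + 2*c*d))*h3

set_option maxHeartbeats 2000000 in
private lemma step2 {g r sp sm c d e n l a u v x V2 P Tv ru rv rx : ℝ}
    (hGd : (1:ℝ) - (g - 1) * V2 ≠ 0)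
    (hV2 : V2 = u^2 + v^2 + x^2)
    (hP : P = -2*sp*u^2 + (sp + r * sm) * v^2 + (sp - r * sm) * x^2
      + 2*r*(c*u*v + d*u*x + e*v*x))
    (hTv : Tv = (((3*g - 4) - 2*(g-1)*a*u) * (1 - V2) + (2 - g) * P) / (1 - (g - 1) * V2))
    (hru : ru = (Tv + 2*sp)*u - 2*r*d*x - 2*r*c*v - a*(v^2 + x^2) - r*n*(v^2 - x^2))
    (hrv : rv = (Tv - sp - r*sm)*v - r*(e + sm*l)*x + r*l*n*u*x + (a + r*n)*u*v)
    (hrx : rx = (Tv - sp + r*sm)*x - r*(e - sm*l)*v - r*l*n*u*v + (a - r*n)*u*x) :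
    u*ru + v*rv + x*rx = (1 - V2)*(((3*g - 4) - 2*(g-1)*a*u)*V2 - P)/(1 - (g - 1)*V2) := by
  subst hV2 hP hTv hru hrv hrx
  field_simp
  ring

set_option maxHeartbeats 4000000 in
private lemma final_alg {g al W w a n Q GP V2 P Vd Dh r sp e l u ra rn Dh' rOm : ℝ}
    (hal : al = 5*(2 - g)/2)
    (hW : W ≠ 0) (hw : w ≠ 0) (hGP : GP ≠ 0)
    (hGd : (1:ℝ) - (g - 1)*V2 ≠ 0) (h1V : (1:ℝ) - V2 ≠ 0)
    (hGPd : GP = 1 + (g - 1) * V2)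
    (hVd : Vd = (1 - V2)*(((3*g - 4) - 2*(g-1)*a*u)*V2 - P)/(1 - (g - 1)*V2))
    (hra : ra = (Q + 2*sp) * a)
    (hrn : rn = (Q + 2*sp + 2*r*e*l) * n)
    (hDh' : Dh' = (2*(Q - 2 - 3*sp + 3*(a*u)) - 2*r*e*l)*Dh)
    (hrOm : rOm = (w/GP) * (2*Q - (3*g-2) + 2*g*a*u + (2*Q*(g-1) - (2-g)) * V2 - g*P)) :
    (((4*a^3*ra*n^2 + a^4*(2*n*rn))*GP^5*Dh^2
        + a^4*n^2*(5*GP^4*((g-1)*(2*Vd)))*Dh^2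
        + a^4*n^2*GP^5*(2*Dh*Dh')) * (W*w^5)
      - a^4*n^2*GP^5*Dh^2 * (-(2*Vd) * al * (W/(1 - V2)) * w^5 + W*(5*w^4*rOm)))
      / (W*w^5)^2
    = a^4*n^2*GP^5*Dh^2/(W*w^5) * ((5*g - 6)*(3 - 2*(a*u))) := by
  subst hal hVd hra hrn hDh' hrOm hGPd
  field_simp
  ring

set_option maxHeartbeats 4000000 in
theorem Z2_monotone (γ : ℝ) (hγ : 0 < γ ∧ γ < 2)
    (sp sm s12 s13 s23 N lam A Om v1 v2 v3 : ℝ → ℝ)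
    (hsol : IsSolutionOn γ Set.univ sp sm s12 s13 s23 N lam A Om v1 v2 v3)
    (hOm : ∀ τ : ℝ, 0 < Om τ)
    (hV : ∀ τ : ℝ, Real.sqrt (Vsq (v1 τ) (v2 τ) (v3 τ)) < 1)
    (hA : ∀ τ : ℝ, A τ ≠ 0) (hN : ∀ τ : ℝ, N τ ≠ 0)
    (hD : ∀ τ : ℝ, Dhat (lam τ) (s12 τ) (s13 τ) ≠ 0) :
    (∀ τ : ℝ, 0 < Z2fun γ s12 s13 N lam A Om v1 v2 v3 τ ∧ 0 < 3 - 2*(A τ)*(v1 τ)) ∧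
    (γ < 6/5 → StrictAnti (Z2fun γ s12 s13 N lam A Om v1 v2 v3)) ∧
    (6/5 < γ → StrictMono (Z2fun γ s12 s13 N lam A Om v1 v2 v3)) := by
  obtain ⟨hγ1, hγ2⟩ := hγ
  have key : ∀ τ : ℝ,
      (0 < Z2fun γ s12 s13 N lam A Om v1 v2 v3 τ ∧ 0 < 3 - 2*(A τ)*(v1 τ)) ∧
      HasDerivAt (Z2fun γ s12 s13 N lam A Om v1 v2 v3)
        (Z2fun γ s12 s13 N lam A Om v1 v2 v3 τ * ((5*γ - 6)*(3 - 2*(A τ)*(v1 τ)))) τ := by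
    intro τ
    obtain ⟨⟨h1, h2, h3, h4, h5, h6, h7, h8, h9, h10, h11, h12⟩, hc1, hc2, hc3, hc4, hc5⟩ :=
      hsol τ (Set.mem_univ τ)
    have hsq3 : (Real.sqrt 3)^2 = 3 := Real.sq_sqrt (by norm_num)
    have hV2nn : 0 ≤ Vsq (v1 τ) (v2 τ) (v3 τ) := by simp only [Vsq]; positivity
    have hV2lt : Vsq (v1 τ) (v2 τ) (v3 τ) < 1 := by
      nlinarith [Real.sq_sqrt hV2nn, Real.sqrt_nonneg (Vsq (v1 τ) (v2 τ) (v3 τ)), hV τ]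
    have h1Vpos : 0 < 1 - Vsq (v1 τ) (v2 τ) (v3 τ) := by linarith
    have hGPpos : 0 < Gp γ (v1 τ) (v2 τ) (v3 τ) := by rw [Gp]; nlinarith
    have hGdpos : 0 < 1 - (γ - 1)*Vsq (v1 τ) (v2 τ) (v3 τ) := by nlinarith
    have hWpos : 0 < (1 - Vsq (v1 τ) (v2 τ) (v3 τ)) ^ (5*(2-γ)/2 : ℝ) := Real.rpow_pos_of_pos h1Vpos _
    have hOmpos := hOm τ
    have hu2 : (v1 τ)^2 ≤ Vsq (v1 τ) (v2 τ) (v3 τ) := by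
      simp only [Vsq]; nlinarith [sq_nonneg (v2 τ), sq_nonneg (v3 τ)]
    have hSig : 0 ≤ Sig2 (sp τ) (sm τ) (s12 τ) (s13 τ) (s23 τ) := by
      simp only [Sig2]; positivity
    have ha2 : (A τ)^2 < 1 := by nlinarith [sq_nonneg (N τ)]
    have h3au : 0 < 3 - 2*(A τ)*(v1 τ) := by nlinarith [sq_nonneg (A τ - v1 τ)]
    have hA4pos : (0:ℝ) < (A τ)^4 :=
      lt_of_le_of_ne (by positivity) (Ne.symm (pow_ne_zero 4 (hA τ)))
    have hN2pos : (0:ℝ) < (N τ)^2 :=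
      lt_of_le_of_ne (by positivity) (Ne.symm (pow_ne_zero 2 (hN τ)))
    have hD2pos : (0:ℝ) < (Dhat (lam τ) (s12 τ) (s13 τ))^2 :=
      lt_of_le_of_ne (by positivity) (Ne.symm (pow_ne_zero 2 (hD τ)))
    have hZpos : 0 < Z2fun γ s12 s13 N lam A Om v1 v2 v3 τ := by
      simp only [Z2fun]
      exact div_pos (mul_pos (mul_pos (mul_pos hA4pos hN2pos) (pow_pos hGPpos 5)) hD2pos)
        (mul_pos hWpos (pow_pos hOmpos 5))
    refine ⟨⟨hZpos, h3au⟩, ?_⟩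
    -- the constraint-derived substitutions
    have he3 : γ*Om τ*v2 τ/(Gp γ (v1 τ) (v2 τ) (v3 τ)) = s12 τ*(N τ + Real.sqrt 3*A τ) + s13 τ*lam τ*N τ := by
      linarith [hc3]
    have he4 : γ*Om τ*v3 τ/(Gp γ (v1 τ) (v2 τ) (v3 τ)) = -(s13 τ*(N τ - Real.sqrt 3*A τ) + s12 τ*lam τ*N τ) := by
      linarith [hc4]
    have hDh'eq : (rhsLam γ (sp τ) (sm τ) (s12 τ) (s13 τ) (s23 τ) (N τ) (lam τ) (A τ) (Om τ) (v1 τ) (v2 τ) (v3 τ))*((s12 τ)^2+(s13 τ)^2) + lam τ*(2*(s12 τ)*(rhsS12 γ (sp τ) (sm τ) (s12 τ) (s13 τ) (s23 τ) (N τ) (lam τ) (A τ) (Om τ) (v1 τ) (v2 τ) (v3 τ))+2*(s13 τ)*(rhsS13 γ (sp τ) (sm τ) (s12 τ) (s13 τ) (s23 τ) (N τ) (lam τ) (A τ) (Om τ) (v1 τ) (v2 τ) (v3 τ))) + 2*((rhsS12 γ (sp τ) (sm τ) (s12 τ) (s13 τ) (s23 τ) (N τ) (lam τ) (A τ) (Om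 τ) (v1 τ) (v2 τ) (v3 τ))*(s13 τ)+(s12 τ)*(rhsS13 γ (sp τ) (sm τ) (s12 τ) (s13 τ) (s23 τ) (N τ) (lam τ) (A τ) (Om τ) (v1 τ) (v2 τ) (v3 τ))) = (2*(qdef γ (sp τ) (sm τ) (s12 τ) (s13 τ) (s23 τ) (Om τ) (v1 τ) (v2 τ) (v3 τ) - 2 - 3*sp τ + 3*(A τ*v1 τ)) - 2*Real.sqrt 3*s23 τ*lam τ)*(Dhat (lam τ) (s12 τ) (s13 τ)) := by
      rw [Dhat]
      exact step1 hsq3 he3 he4 rfl rfl rfl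
    have hVdeq : (v1 τ*(rhsV1 γ (sp τ) (sm τ) (s12 τ) (s13 τ) (s23 τ) (N τ) (lam τ) (A τ) (Om τ) (v1 τ) (v2 τ) (v3 τ)) + v2 τ*(rhsV2 γ (sp τ) (sm τ) (s12 τ) (s13 τ) (s23 τ) (N τ) (lam τ) (A τ) (Om τ) (v1 τ) (v2 τ) (v3 τ)) + v3 τ*(rhsV3 γ (sp τ) (sm τ) (s12 τ) (s13 τ) (s23 τ) (N τ) (lam τ) (A τ) (Om τ) (v1 τ) (v2 τ) (v3 τ))) = (1 - Vsq (v1 τ) (v2 τ) (v3 τ))*(((3*γ - 4) - 2*(γ-1)*(A τ)*(v1 τ))*(Vsq (v1 τ) (v2 τ) (v3 τ)) - (Pdef (sp τ) (sm τ) (s12 τ) (s13 τ) (s23 τ) (v1 τ) (v2 τ) (v3 τ)))/(1 - (γ - 1)*(Vsq (v1 τ) (v2 τ) (v3 τ))) :=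
      step2 hGdpos.ne' rfl rfl rfl rfl rfl rfl
    -- derivative construction
    have hA4 : HasDerivAt (fun t => A t^4) (4*(A τ)^3*(rhsA γ (sp τ) (sm τ) (s12 τ) (s13 τ) (s23 τ) (N τ) (lam τ) (A τ) (Om τ) (v1 τ) (v2 τ) (v3 τ))) τ := by
      convert h8.fun_pow 4 using 1
      all_goals try rfl
      all_goals push_cast
      all_goals try norm_num
      all_goals try ring
    have hN2 : HasDerivAt (fun t => N t^2) (2*(N τ)*(rhsN γ (sp τ) (sm τ) (s12 τ) (s13 τ) (s23 τ) (N τ) (lam τ) (A τ) (Om τ) (v1 τ) (v2 τ) (v3 τ))) τ := by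
      convert h6.fun_pow 2 using 1
      all_goals try rfl
      all_goals push_cast
      all_goals try norm_num
      all_goals try ring
    have hAN := hA4.fun_mul hN2
    have hvsq : HasDerivAt (fun t => Vsq (v1 t) (v2 t) (v3 t)) (2*(v1 τ*(rhsV1 γ (sp τ) (sm τ) (s12 τ) (s13 τ) (s23 τ) (N τ) (lam τ) (A τ) (Om τ) (v1 τ) (v2 τ) (v3 τ)) + v2 τ*(rhsV2 γ (sp τ) (sm τ) (s12 τ) (s13 τ) (s23 τ) (N τ) (lam τ) (A τ) (Om τ) (v1 τ) (v2 τ) (v3 τ)) + v3 τ*(rhsV3 γ (sp τ) (sm τ) (s12 τ) (s13 τ) (s23 τ) (N τ) (lam τ) (A τ) (Om τ) (v1 τ) (v2 τ) (v3 τ)))) τ := by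
      show HasDerivAt (fun t => (v1 t)^2 + (v2 t)^2 + (v3 t)^2) _ τ
      convert ((h10.fun_pow 2).fun_add (h11.fun_pow 2)).fun_add (h12.fun_pow 2) using 1
      all_goals try rfl
      all_goals push_cast
      all_goals try norm_num
      all_goals try ring
    have hgp' : HasDerivAt (fun t => Gp γ (v1 t) (v2 t) (v3 t)) ((γ-1)*(2*(v1 τ*(rhsV1 γ (sp τ) (sm τ) (s12 τ) (s13 τ) (s23 τ) (N τ) (lam τ) (A τ) (Om τ) (v1 τ) (v2 τ) (v3 τ)) + v2 τ*(rhsV2 γ (sp τ) (sm τ) (s12 τ) (s13 τ) (s23 τ) (N τ) (lam τ) (A τ) (Om τ) (v1 τ) (v2 τ) (v3 τ)) + v3 τ*(rhsV3 γ (sp τ) (sm τ) (s12 τ) (s13 τ) (s23 τ) (N τ) (lam τ) (A τ) (Om τ) (v1 τ) (v2 τ) (v3 τ))))) τ :=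
      (hvsq.const_mul (γ-1)).const_add 1
    have hgp5 : HasDerivAt (fun t => (Gp γ (v1 t) (v2 t) (v3 t))^5)
        (5*(Gp γ (v1 τ) (v2 τ) (v3 τ))^4*((γ-1)*(2*(v1 τ*(rhsV1 γ (sp τ) (sm τ) (s12 τ) (s13 τ) (s23 τ) (N τ) (lam τ) (A τ) (Om τ) (v1 τ) (v2 τ) (v3 τ)) + v2 τ*(rhsV2 γ (sp τ) (sm τ) (s12 τ) (s13 τ) (s23 τ) (N τ) (lam τ) (A τ) (Om τ) (v1 τ) (v2 τ) (v3 τ)) + v3 τ*(rhsV3 γ (sp τ) (sm τ) (s12 τ) (s13 τ) (s23 τ) (N τ) (lam τ) (A τ) (Om τ) (v1 τ) (v2 τ) (v3 τ)))))) τ := by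
      convert hgp'.fun_pow 5 using 1
      all_goals try rfl
      all_goals push_cast
      all_goals try norm_num
      all_goals try ring
    have hdh0 : HasDerivAt (fun t => Dhat (lam t) (s12 t) (s13 t)) ((rhsLam γ (sp τ) (sm τ) (s12 τ) (s13 τ) (s23 τ) (N τ) (lam τ) (A τ) (Om τ) (v1 τ) (v2 τ) (v3 τ))*((s12 τ)^2+(s13 τ)^2) + lam τ*(2*(s12 τ)*(rhsS12 γ (sp τ) (sm τ) (s12 τ) (s13 τ) (s23 τ) (N τ) (lam τ) (A τ) (Om τ) (v1 τ) (v2 τ) (v3 τ))+2*(s13 τ)*(rhsS13 γ (sp τ) (sm τ) (s12 τ) (s13 τ) (s23 τ) (N τ) (lam τ) (A τ) (Om τ) (v1 τ) (v2 τ) (v3 τ))) + 2*((rhsS12 γ (sp τ) (sm τ) (s12 τ) (s13 τ) (s23 τ) (N τ) (lam τ) (A τ) (Om τ) (v1 τ) (v2 τ) (v3 τ))*(s13 τ)+(s12 τ)*(rhsS13 γ (sp τ) (sm τ) (s12 τ) (s13 τ) (s23 τ) (N τ) (lam τ) (A τ) (Om τ) (v1 τ) (v2 τ) (v3 τ))))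 τ := by
      show HasDerivAt (fun t => lam t*((s12 t)^2 + (s13 t)^2) + 2*s12 t*s13 t) _ τ
      convert (h7.fun_mul ((h3.fun_pow 2).fun_add (h4.fun_pow 2))).fun_add ((h3.const_mul 2).fun_mul h4) using 1
      all_goals try rfl
      all_goals push_cast
      all_goals try norm_num
      all_goals try ring
    have hdh2 : HasDerivAt (fun t => (Dhat (lam t) (s12 t) (s13 t))^2)
        (2*(Dhat (lam τ) (s12 τ) (s13 τ))*((rhsLam γ (sp τ) (sm τ) (s12 τ) (s13 τ) (s23 τ) (N τ) (lam τ) (A τ) (Om τ) (v1 τ) (v2 τ) (v3 τ))*((s12 τ)^2+(s13 τ)^2) + lam τ*(2*(s12 τ)*(rhsS12 γ (sp τ) (sm τ) (s12 τ) (s13 τ) (s23 τ) (N τ) (lam τ) (A τ) (Om τ) (v1 τ) (v2 τ) (v3 τ))+2*(s13 τ)*(rhsS13 γ (sp τ) (sm τ) (s12 τ) (s13 τ) (s23 τ) (N τ) (lam τ) (A τ) (Om τ) (v1 τ) (v2 τ) (v3 τ))) + 2*((rhsS12 γ (sp τ) (sm τ) (s12 τ) (s13 τ) (s23 τ) (N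 τ) (lam τ) (A τ) (Om τ) (v1 τ) (v2 τ) (v3 τ))*(s13 τ)+(s12 τ)*(rhsS13 γ (sp τ) (sm τ) (s12 τ) (s13 τ) (s23 τ) (N τ) (lam τ) (A τ) (Om τ) (v1 τ) (v2 τ) (v3 τ))))) τ := by
      convert hdh0.fun_pow 2 using 1
      all_goals try rfl
      all_goals push_cast
      all_goals try norm_num
      all_goals try ring
    have hnum := (hAN.fun_mul hgp5).fun_mul hdh2
    have hbase : HasDerivAt (fun t => 1 - Vsq (v1 t) (v2 t) (v3 t)) (-(2*(v1 τ*(rhsV1 γ (sp τ) (sm τ) (s12 τ) (s13 τ) (s23 τ) (N τ) (lam τ) (A τ) (Om τ) (v1 τ) (v2 τ) (v3 τ)) + v2 τ*(rhsV2 γ (sp τ) (sm τ) (s12 τ) (s13 τ) (s23 τ) (N τ) (lam τ) (A τ) (Om τ) (v1 τ) (v2 τ) (v3 τ)) + v3 τ*(rhsV3 γ (sp τ) (sm τ) (s12 τ) (s13 τ) (s23 τ) (N τ) (lam τ) (A τ) (Om τ) (v1 τ) (v2 τ) (v3 τ))))) τ :=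
      hvsq.const_sub 1
    have hWd : HasDerivAt (fun t => (1 - Vsq (v1 t) (v2 t) (v3 t)) ^ (5*(2-γ)/2 : ℝ))
        (-(2*(v1 τ*(rhsV1 γ (sp τ) (sm τ) (s12 τ) (s13 τ) (s23 τ) (N τ) (lam τ) (A τ) (Om τ) (v1 τ) (v2 τ) (v3 τ)) + v2 τ*(rhsV2 γ (sp τ) (sm τ) (s12 τ) (s13 τ) (s23 τ) (N τ) (lam τ) (A τ) (Om τ) (v1 τ) (v2 τ) (v3 τ)) + v3 τ*(rhsV3 γ (sp τ) (sm τ) (s12 τ) (s13 τ) (s23 τ) (N τ) (lam τ) (A τ) (Om τ) (v1 τ) (v2 τ) (v3 τ)))) * (5*(2-γ)/2) * (((1 - Vsq (v1 τ) (v2 τ) (v3 τ)) ^ (5*(2-γ)/2 : ℝ))/(1 - Vsq (v1 τ) (v2 τ) (v3 τ)))) τ := by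
      have h := hbase.rpow_const (p := 5*(2-γ)/2) (Or.inl h1Vpos.ne')
      rw [show ((1:ℝ) - Vsq (v1 τ) (v2 τ) (v3 τ)) ^ ((5*(2-γ)/2 : ℝ) - 1)
          = ((1 - Vsq (v1 τ) (v2 τ) (v3 τ)) ^ (5*(2-γ)/2 : ℝ))/(1 - Vsq (v1 τ) (v2 τ) (v3 τ)) from by
        rw [Real.rpow_sub h1Vpos, Real.rpow_one]] at h
      exact h
    have hOm5 : HasDerivAt (fun t => Om t^5) (5*(Om τ)^4*(rhsOm γ (sp τ) (sm τ) (s12 τ) (s13 τ) (s23 τ) (N τ) (lam τ) (A τ) (Om τ) (v1 τ) (v2 τ) (v3 τ))) τ := by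
      convert h9.fun_pow 5 using 1
      all_goals try rfl
      all_goals push_cast
      all_goals try norm_num
      all_goals try ring
    have hden := hWd.fun_mul hOm5
    have hdnz : ((1 - Vsq (v1 τ) (v2 τ) (v3 τ)) ^ (5*(2-γ)/2 : ℝ))*(Om τ)^5 ≠ 0 := (mul_pos hWpos (pow_pos hOmpos 5)).ne'
    have hZD := hnum.fun_div hden hdnz
    have hraeq : rhsA γ (sp τ) (sm τ) (s12 τ) (s13 τ) (s23 τ) (N τ) (lam τ) (A τ) (Om τ) (v1 τ) (v2 τ) (v3 τ) = (qdef γ (sp τ) (sm τ) (s12 τ) (s13 τ) (s23 τ) (Om τ) (v1 τ) (v2 τ) (v3 τ) + 2*sp τ) * A τ := rfl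
    have hrneq : rhsN γ (sp τ) (sm τ) (s12 τ) (s13 τ) (s23 τ) (N τ) (lam τ) (A τ) (Om τ) (v1 τ) (v2 τ) (v3 τ) = (qdef γ (sp τ) (sm τ) (s12 τ) (s13 τ) (s23 τ) (Om τ) (v1 τ) (v2 τ) (v3 τ) + 2*sp τ + 2*Real.sqrt 3*s23 τ*lam τ) * N τ := rfl
    have hrOmeq : rhsOm γ (sp τ) (sm τ) (s12 τ) (s13 τ) (s23 τ) (N τ) (lam τ) (A τ) (Om τ) (v1 τ) (v2 τ) (v3 τ) = (Om τ/(Gp γ (v1 τ) (v2 τ) (v3 τ))) * (2*(qdef γ (sp τ) (sm τ) (s12 τ) (s13 τ) (s23 τ) (Om τ) (v1 τ) (v2 τ) (v3 τ)) - (3*γ-2) + 2*γ*(A τ)*(v1 τ) + (2*(qdef γ (sp τ) (sm τ) (s12 τ) (s13 τ) (s23 τ) (Om τ) (v1 τ) (v2 τ) (v3 τ))*(γ-1) - (2-γ)) * (Vsq (v1 τ) (v2 τ) (v3 τ)) - γ*(Pdef (sp τ) (sm τ) (s12 τ) (s13 τ) (s23 τ) (v1 τ) (v2 τ) (v3 τ)))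 := rfl
    have hGPdeq : Gp γ (v1 τ) (v2 τ) (v3 τ) = 1 + (γ - 1) * (Vsq (v1 τ) (v2 τ) (v3 τ)) := rfl
    refine HasDerivAt.congr_deriv hZD ?_
    simp only [Z2fun]
    linear_combination final_alg (g := γ) (hal := rfl) (hW := hWpos.ne') (hw := hOmpos.ne')
      (hGP := hGPpos.ne') (hGd := hGdpos.ne') (h1V := h1Vpos.ne') (hGPd := hGPdeq)
      (hVd := hVdeq) (hra := hraeq) (hrn := hrneq) (hDh' := hDh'eq) (hrOm := hrOmeq)
  refine ⟨fun τ => (key τ).1, fun h65 => ?_, fun h65 => ?_⟩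
  · refine strictAnti_of_hasDerivAt_neg (fun τ => (key τ).2) (fun τ => ?_)
    obtain ⟨⟨hz, hb⟩, -⟩ := key τ
    nlinarith [mul_pos hz hb]
  · refine strictMono_of_hasDerivAt_pos (fun τ => (key τ).2) (fun τ => ?_)
    obtain ⟨⟨hz, hb⟩, -⟩ := key τ
    nlinarith [mul_pos hz hb]

end BianchiVI
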